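/- Let X be a finite topological T₀-space and let φ : ℝ≥0 × X → X be a semiflow. Then the time-one map r := φ(1,·) : X → X is idempotent, r ∘ r = r; in particular r is a retraction of X onto its image r(X), i.e., r(a) = a for every a ∈ r(X). -/

import Mathlib

open NNReal

/-- A semiflow on a topological space `X`: a jointly continuous map
`φ : ℝ≥0 × X → X` with `φ 0 x = x` and `φ s (φ t x) = φ (s + t) x`. -/
def IsSemiflow {X : Type*} [TopologicalSpace X] (φ : ℝ≥0 → X → X) : Prop :=
  Continuous (fun p : ℝ≥0 × X => φ p.1 p.2) ∧
  (∀ x : X, φ 0 x = x) ∧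
  ∀ (s t : ℝ≥0) (x : X), φ s (φ t x) = φ (s + t) x

/-- A semiflow is trivial if every time-`t` map is the identity. -/
def IsTrivialSemiflow {X : Type*} [TopologicalSpace X] (φ : ℝ≥0 → X → X) : Prop :=
  ∀ (t : ℝ≥0) (x : X), φ t x = x

/-- `x` is a down beat point: `U_x \ {x}` has a greatest element in the
specialization order (`y ⤳ x` means `y ≤ x`, i.e. `y ∈ U_x`). -/
def IsDownBeatPoint {X : Type*} [TopologicalSpace X] (x : X) : Prop :=
  ∃ m : X, (m ⤳ x ∧ m ≠ x) ∧ ∀ y : X, y ⤳ x → y ≠ x → y ⤳ m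

/-- `x` is an up beat point: `F_x \ {x}` has a least element in the
specialization order. -/
def IsUpBeatPoint {X : Type*} [TopologicalSpace X] (x : X) : Prop :=
  ∃ m : X, (x ⤳ m ∧ m ≠ x) ∧ ∀ y : X, x ⤳ y → y ≠ x → m ⤳ y

theorem semiflow_key {X : Type*} [TopologicalSpace X] [Finite X]
    [T0Space X] (φ : ℝ≥0 → X → X)
    (hcont : Continuous (fun p : ℝ≥0 × X => φ p.1 p.2))
    (h0 : ∀ x : X, φ 0 x = x)
    (hadd : ∀ (s t : ℝ≥0) (x : X), φ s (φ t x) = φ (s + t) x) :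
    ∀ (y : X) (t t' : ℝ≥0), 0 < t → 0 < t' → φ t y = φ t' y := by
  -- Lemma A
  obtain ⟨ε, hε, hA⟩ : ∃ ε : ℝ≥0, 0 < ε ∧ ∀ z : X, ∀ s ≤ ε, φ s z ⤳ z := by
    have hev : ∀ᶠ s in nhds (0:ℝ≥0), ∀ z : X, φ s z ⤳ z := by
      rw [Filter.eventually_all]
      intro z
      have hc : Continuous fun t : ℝ≥0 => φ t z :=
        hcont.comp (continuous_id.prodMk continuous_const)
      have ht : Filter.Tendsto (fun t : ℝ≥0 => φ t z) (nhds 0) (nhds z) := by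
        have := hc.continuousAt (x := 0)
        rwa [ContinuousAt, h0 z] at this
      have hmem : {w : X | w ⤳ z} ∈ nhds z := by
        have hop : IsOpen (nhdsKer {z} : Set X) := isOpen_nhdsKer
        have hz : z ∈ nhdsKer {z} := subset_nhdsKer rfl
        filter_upwards [hop.mem_nhds hz] with w hw
        exact mem_nhdsKer_singleton.1 hw
      exact ht.eventually hmem
    obtain ⟨ε, hε, h⟩ := NNReal.nhds_zero_basis.eventually_iff.1 hev
    exact ⟨ε / 2, by positivity, fun z s hs =>
      h (lt_of_le_of_lt hs (NNReal.half_lt_self hε.ne')) z⟩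
  -- single step
  have step : ∀ (y : X) (t d : ℝ≥0), d ≤ ε → φ (t + d) y ⤳ φ t y := by
    intro y t d hd
    have := hA (φ t y) d hd
    rwa [hadd d t y, add_comm d t] at this
  -- monotone
  have mono : ∀ (y : X) (t d : ℝ≥0), φ (t + d) y ⤳ φ t y := by
    have H : ∀ n : ℕ, ∀ (y : X) (t d : ℝ≥0), d ≤ n * ε → φ (t + d) y ⤳ φ t y := by
      intro n
      induction n with
      | zero =>
        intro y t d hd
        simp only [Nat.cast_zero, zero_mul, le_zero_iff] at hd
        rw [hd, add_zero]
      | succ n ih =>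
        intro y t d hd
        by_cases hdε : d ≤ ε
        · exact step y t d hdε
        · push_neg at hdε
          have h1 : t + d = (t + ε) + (d - ε) := by
            rw [add_assoc, add_tsub_cancel_of_le hdε.le]
          have h2 : d - ε ≤ n * ε := by
            have hd' : d ≤ n * ε + ε := by
              calc d ≤ (n + 1 : ℕ) * ε := hd
              _ = n * ε + ε := by push_cast; ring
            exact tsub_le_iff_right.2 hd'
          rw [h1]
          exact (ih y (t + ε) (d - ε) h2).trans (step y t ε le_rfl)
    intro y t d
    obtain ⟨n, hn⟩ := exists_nat_ge (d / ε)
    refine H n y t d ?_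
    rw [div_le_iff₀ hε] at hn
    exact hn
  have mono' : ∀ (y : X) (t t' : ℝ≥0), t ≤ t' → φ t' y ⤳ φ t y := by
    intro y t t' h
    have := mono y t (t' - t)
    rwa [add_tsub_cancel_of_le h] at this
  -- main argument per point
  have main : ∀ (y : X) (t : ℝ≥0), 0 < t → ∃ z : X, ∀ t' : ℝ≥0, 0 < t' → φ t' y = z := by
    intro y t0 ht0
    clear ht0 t0
    set u : ℕ → ℝ≥0 := fun n => ε / 2 ^ n with hu
    have hupos : ∀ n, 0 < u n := fun n => by positivity
    have humono : ∀ {m n : ℕ}, m ≤ n → u n ≤ u m := by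
      intro m n h
      have h2 : (2:ℝ≥0) ^ m ≤ 2 ^ n := pow_le_pow_right₀ one_le_two h
      show ε / 2 ^ n ≤ ε / 2 ^ m
      gcongr
    have hhalf : ∀ n, u (n + 1) + u (n + 1) = u n := by
      intro n
      show ε / 2 ^ (n+1) + ε / 2 ^ (n+1) = ε / 2 ^ n
      rw [← two_mul, pow_succ, ← div_div, mul_comm, div_mul_cancel₀ _ two_ne_zero]
    have hsmall : ∀ t : ℝ≥0, 0 < t → ∃ m : ℕ, u m ≤ t := by
      intro t ht
      obtain ⟨m, hm⟩ := exists_nat_ge (ε / t)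
      refine ⟨m, ?_⟩
      have h2 : (m : ℝ≥0) ≤ 2 ^ m := by
        exact_mod_cast (Nat.lt_two_pow_self : m < 2 ^ m).le
      rw [div_le_iff₀ (by positivity)]
      rw [div_le_iff₀ ht] at hm
      calc ε ≤ m * t := hm
      _ ≤ 2 ^ m * t := mul_le_mul_left h2 t
      _ = t * 2 ^ m := mul_comm _ _
    -- pigeonhole
    obtain ⟨z, hzinf'⟩ := Finite.exists_infinite_fiber (fun n => φ (u n) y)
    have hzinf : ((fun n => φ (u n) y) ⁻¹' {z}).Infinite := Set.infinite_coe_iff.1 hzinf'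
    obtain ⟨N, hNS, -⟩ := hzinf.exists_gt 0
    have hNz : φ (u N) y = z := hNS
    -- claim C : all small positive times give z
    have claimC : ∀ t : ℝ≥0, 0 < t → t ≤ u N → φ t y = z := by
      intro t ht htN
      obtain ⟨m, hm⟩ := hsmall t ht
      obtain ⟨m', hm'S, hmm'⟩ := hzinf.exists_gt (max m N)
      have hm'z : φ (u m') y = z := hm'S
      have h1 : φ t y ⤳ z := by
        rw [← hm'z]
        exact mono' y (u m') t ((humono ((le_max_left m N).trans hmm'.le)).trans hm)
      have h2 : z ⤳ φ t y := by
        rw [← hNz]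
        exact mono' y t (u N) htN
      exact (h1.antisymm h2).eq
    -- z is fixed for small times
    have claimD : ∀ v : ℝ≥0, v ≤ u (N + 1) → φ v z = z := by
      intro v hv
      have h1 : φ (u (N+1)) y = z :=
        claimC _ (hupos _) ((le_add_self : u (N+1) ≤ u (N+1) + u (N+1)).trans_eq (hhalf N))
      have h2 : φ (v + u (N+1)) y = z := by
        refine claimC _ (by positivity) ?_
        calc v + u (N+1) ≤ u (N+1) + u (N+1) := add_le_add_left hv _
        _ = u N := hhalf N
      calc φ v z = φ v (φ (u (N+1)) y) := by rw [h1]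
      _ = φ (v + u (N+1)) y := hadd _ _ _
      _ = z := h2
    -- z is fixed for all times
    have claimE : ∀ v : ℝ≥0, φ v z = z := by
      have H : ∀ n : ℕ, ∀ v : ℝ≥0, v ≤ n * u (N+1) → φ v z = z := by
        intro n
        induction n with
        | zero =>
          intro v hv
          simp only [Nat.cast_zero, zero_mul, le_zero_iff] at hv
          simp [hv, h0]
        | succ n ih =>
          intro v hv
          by_cases hvc : v ≤ u (N+1)
          · exact claimD v hvc
          · push_neg at hvc
            have h1 : φ (v - u (N+1)) (φ (u (N+1)) z) = φ v z := by
              rw [hadd, tsub_add_cancel_of_le hvc.le]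
            rw [← h1, claimD _ le_rfl]
            refine ih _ ?_
            have hv' : v ≤ n * u (N+1) + u (N+1) := by
              calc v ≤ (n + 1 : ℕ) * u (N+1) := hv
              _ = n * u (N+1) + u (N+1) := by push_cast; ring
            exact tsub_le_iff_right.2 hv'
      intro v
      obtain ⟨n, hn⟩ := exists_nat_ge (v / u (N+1))
      refine H n v ?_
      rw [div_le_iff₀ (hupos _)] at hn
      exact hn
    -- conclude
    refine ⟨z, fun t' ht' => ?_⟩
    rcases le_or_gt t' (u N) with h | h
    · exact claimC t' ht' h
    · have h1 : φ (u (N+1)) y = z :=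
        claimC _ (hupos _) (((le_add_self : u (N+1) ≤ u (N+1) + u (N+1)).trans_eq (hhalf N)))
      have hle : u (N+1) ≤ t' := (humono (Nat.le_succ N)).trans h.le
      have : φ (t' - u (N+1)) (φ (u (N+1)) y) = φ t' y := by
        rw [hadd, tsub_add_cancel_of_le hle]
      rw [← this, h1, claimE]
  intro y t t' ht ht'
  obtain ⟨z, hz⟩ := main y t ht
  rw [hz t ht, hz t' ht']

/-- For a semiflow on a finite `T₀`-space, the time-one map `r := φ 1` is
idempotent; in particular it is a retraction onto its image. -/
theorem semiflow_time_one_idempotent {X : Type*} [TopologicalSpace X] [Finite X]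
    [T0Space X] (φ : ℝ≥0 → X → X) (hφ : IsSemiflow φ) :
    (φ 1) ∘ (φ 1) = φ 1 ∧ ∀ a ∈ Set.range (φ 1), φ 1 a = a := by
  obtain ⟨hcont, h0, hadd⟩ := hφ
  have key := semiflow_key φ hcont h0 hadd
  have h2 : ∀ x : X, φ 1 (φ 1 x) = φ 1 x := by
    intro x
    rw [hadd]
    exact key x (1 + 1) 1 (by norm_num) one_pos
  refine ⟨funext fun x => h2 x, ?_⟩
  rintro a ⟨x, rfl⟩
  exact h2 x
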